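/- Let F : [a,b] → Set ℝ with F(x) = Set.Icc (f₁ x) (f₂ x), where f₁ is convex, f₂ is concave, and f₁ ≤ f₂ on [a,b]. Let x₁,…,xₙ ∈ [a,b], μ₁,…,μₙ ≥ 0 with ∑μᵢ = 1, and λ₁, λ₂ ≥ 0 with λ₁ + λ₂ = 1. If ∑μᵢxᵢ = λ₁a + λ₂b, then λ₁•F(a) + λ₂•F(b) ⊆ ∑ᵢ μᵢ•F(xᵢ). -/

import Mathlib

open Pointwise

lemma myIcc_add_Icc (p q r s : ℝ) (hpq : p ≤ q) (hrs : r ≤ s) :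
    Set.Icc p q + Set.Icc r s = Set.Icc (p + r) (q + s) := by
  ext z
  constructor
  · rintro ⟨u, hu, v, hv, rfl⟩
    exact ⟨add_le_add hu.1 hv.1, add_le_add hu.2 hv.2⟩
  · rintro ⟨h1, h2⟩
    refine ⟨max p (z - s), ⟨le_max_left _ _, max_le hpq (by linarith)⟩,
      z - max p (z - s), ⟨?_, ?_⟩, by ring⟩
    · have : max p (z - s) ≤ z - r := max_le (by linarith) (by linarith)
      linarith
    · have : z - s ≤ max p (z - s) := le_max_right _ _
      linarith

lemma mySmul_Icc (c u v : ℝ) (hc : 0 ≤ c) (huv : u ≤ v) :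
    c • Set.Icc u v = Set.Icc (c * u) (c * v) := by
  rcases hc.lt_or_eq with h | rfl
  · simpa using LinearOrderedField.smul_Icc h
  · rw [Set.zero_smul_set (Set.nonempty_Icc.2 huv), zero_mul, zero_mul,
      Set.Icc_self, Set.singleton_zero]

lemma sum_smul_Icc {ι : Type*} (s : Finset ι) (μ u v : ι → ℝ)
    (hμ : ∀ i ∈ s, 0 ≤ μ i) (huv : ∀ i ∈ s, u i ≤ v i) :
    ∑ i ∈ s, μ i • Set.Icc (u i) (v i)
      = Set.Icc (∑ i ∈ s, μ i * u i) (∑ i ∈ s, μ i * v i) := by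
  induction s using Finset.cons_induction with
  | empty => rw [Finset.sum_empty, Finset.sum_empty, Finset.sum_empty, Set.Icc_self,
      Set.singleton_zero]
  | cons i s hi ih =>
    rw [Finset.sum_cons, Finset.sum_cons, Finset.sum_cons,
      ih (fun j hj => hμ j (Finset.mem_cons_of_mem hj))
        (fun j hj => huv j (Finset.mem_cons_of_mem hj)),
      mySmul_Icc _ _ _ (hμ i (Finset.mem_cons_self i s)) (huv i (Finset.mem_cons_self i s)),
      myIcc_add_Icc]
    · exact mul_le_mul_of_nonneg_left (huv i (Finset.mem_cons_self i s))
        (hμ i (Finset.mem_cons_self i s))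
    · exact Finset.sum_le_sum fun j hj =>
        mul_le_mul_of_nonneg_left (huv j (Finset.mem_cons_of_mem hj))
          (hμ j (Finset.mem_cons_of_mem hj))

theorem stmt_13 (a b : ℝ) (hab : a ≤ b)
    (f₁ f₂ : ℝ → ℝ) (F : ℝ → Set ℝ)
    (hF : ∀ x ∈ Set.Icc a b, F x = Set.Icc (f₁ x) (f₂ x))
    (hconv : ∀ x ∈ Set.Icc a b, ∀ y ∈ Set.Icc a b, ∀ t ∈ Set.Icc (0:ℝ) 1,
      f₁ (t * x + (1 - t) * y) ≤ t * f₁ x + (1 - t) * f₁ y)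
    (hconc : ∀ x ∈ Set.Icc a b, ∀ y ∈ Set.Icc a b, ∀ t ∈ Set.Icc (0:ℝ) 1,
      t * f₂ x + (1 - t) * f₂ y ≤ f₂ (t * x + (1 - t) * y))
    (hle : ∀ x ∈ Set.Icc a b, f₁ x ≤ f₂ x)
    (n : ℕ) (x : Fin n → ℝ) (hx : ∀ i, x i ∈ Set.Icc a b)
    (μ : Fin n → ℝ) (hμ : ∀ i, 0 ≤ μ i) (hμ1 : ∑ i, μ i = 1)
    (l₁ l₂ : ℝ) (hl₁ : 0 ≤ l₁) (hl₂ : 0 ≤ l₂) (hl : l₁ + l₂ = 1)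
    (hbar : ∑ i, μ i * x i = l₁ * a + l₂ * b) :
    l₁ • F a + l₂ • F b ⊆ ∑ i, μ i • F (x i) := by
  have ha : a ∈ Set.Icc a b := ⟨le_refl a, hab⟩
  have hb : b ∈ Set.Icc a b := ⟨hab, le_refl b⟩
  have hl₂' : l₂ = 1 - l₁ := by linarith
  have hRHS : ∑ i, μ i • F (x i)
      = Set.Icc (∑ i, μ i * f₁ (x i)) (∑ i, μ i * f₂ (x i)) := by
    rw [Finset.sum_congr rfl fun i _ => by rw [hF (x i) (hx i)]]
    exact sum_smul_Icc _ _ _ _ (fun i _ => hμ i) (fun i _ => hle _ (hx i))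
  rw [hRHS, hF a ha, hF b hb, mySmul_Icc _ _ _ hl₁ (hle a ha),
    mySmul_Icc _ _ _ hl₂ (hle b hb),
    myIcc_add_Icc _ _ _ _ (mul_le_mul_of_nonneg_left (hle a ha) hl₁)
      (mul_le_mul_of_nonneg_left (hle b hb) hl₂)]
  -- key inequalities
  rcases eq_or_lt_of_le hab with rfl | hab'
  · have hx' : ∀ i, x i = a := fun i => le_antisymm (hx i).2 (hx i).1
    have h1 : ∑ i, μ i * f₁ (x i) = l₁ * f₁ a + l₂ * f₁ a := by
      simp only [fun i => hx' i]
      rw [← Finset.sum_mul, hμ1, hl₂']; ring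
    have h2 : ∑ i, μ i * f₂ (x i) = l₁ * f₂ a + l₂ * f₂ a := by
      simp only [fun i => hx' i]
      rw [← Finset.sum_mul, hμ1, hl₂']; ring
    exact Set.Icc_subset_Icc h1.le h2.ge
  · set t : Fin n → ℝ := fun i => (b - x i) / (b - a) with ht
    have hba : (0:ℝ) < b - a := by linarith
    have hti : ∀ i, t i ∈ Set.Icc (0:ℝ) 1 := fun i =>
      ⟨div_nonneg (by linarith [(hx i).2]) hba.le,
       (div_le_one hba).2 (by linarith [(hx i).1])⟩
    have hxi : ∀ i, x i = t i * a + (1 - t i) * b := fun i => by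
      simp only [ht]; field_simp [hba.ne']; ring
    have hts : ∑ i, μ i * t i = l₁ := by
      have h1 : ∑ i, μ i * t i = (∑ i, μ i * (b - x i)) / (b - a) := by
        rw [Finset.sum_div]
        exact Finset.sum_congr rfl fun i _ => by rw [ht]; ring
      have h2 : ∑ i, μ i * (b - x i) = l₁ * (b - a) := by
        have : ∑ i, μ i * (b - x i) = (∑ i, μ i) * b - ∑ i, μ i * x i := by
          rw [Finset.sum_mul, ← Finset.sum_sub_distrib]
          exact Finset.sum_congr rfl fun i _ => by ring
        rw [this, hμ1, hbar, hl₂']; ring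
      rw [h1, h2, mul_div_assoc, div_self hba.ne', mul_one]
    have expand : ∀ c d : ℝ, ∑ i, μ i * (t i * c + (1 - t i) * d) = l₁ * c + l₂ * d := by
      intro c d
      have h : ∑ i, μ i * (t i * c + (1 - t i) * d)
          = (∑ i, μ i * t i) * (c - d) + (∑ i, μ i) * d := by
        rw [Finset.sum_mul, Finset.sum_mul, ← Finset.sum_add_distrib]
        exact Finset.sum_congr rfl fun i _ => by ring
      rw [h, hts, hμ1, hl₂']; ring
    have key1 : ∑ i, μ i * f₁ (x i) ≤ l₁ * f₁ a + l₂ * f₁ b := by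
      rw [← expand (f₁ a) (f₁ b)]
      exact Finset.sum_le_sum fun i _ => mul_le_mul_of_nonneg_left
        (by rw [hxi i]; exact hconv a ha b hb (t i) (hti i)) (hμ i)
    have key2 : l₁ * f₂ a + l₂ * f₂ b ≤ ∑ i, μ i * f₂ (x i) := by
      rw [← expand (f₂ a) (f₂ b)]
      exact Finset.sum_le_sum fun i _ => mul_le_mul_of_nonneg_left
        (by rw [hxi i]; exact hconc a ha b hb (t i) (hti i)) (hμ i)
    exact Set.Icc_subset_Icc key1 key2
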